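/- Let p be a prime and k ≥ 1 an integer. Let ζ be a fixed primitive p^k-th root of unity in the cyclotomic field ℚ(ζ_{p^k}), and set η = ζ + ζ^p + ζ^{p^2} + ⋯ + ζ^{p^{k−1}} (the sum of the k elements ζ^{p^j} for 0 ≤ j ≤ k−1). Then the family (σ(η)), indexed by the automorphisms σ in the Galois group Gal(ℚ(ζ_{p^k})/ℚ), is a basis of ℚ(ζ_{p^k}) as a ℚ-vector space; that is, η is a normal basis generator of the extension ℚ(ζ_{p^k})/ℚ. -/

import Mathlib

open Finset

/-- Sum over units of `ZMod n` as a sum over coprime residues. -/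
lemma sum_units_val_aux {M : Type*} [AddCommMonoid M] (n : ℕ) [NeZero n] (g : ℕ → M) :
    ∑ u : (ZMod n)ˣ, g (u : ZMod n).val
      = ∑ m ∈ (Finset.range n).filter (fun m => Nat.Coprime m n), g m := by
  refine Finset.sum_bij' (fun u _ => (u : ZMod n).val)
    (fun m hm => ZMod.unitOfCoprime m (Finset.mem_filter.mp hm).2) ?_ ?_ ?_ ?_ ?_
  · intro u _
    exact Finset.mem_filter.mpr ⟨Finset.mem_range.mpr (ZMod.val_lt _),
      ZMod.val_coe_unit_coprime u⟩
  · intro m hm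
    exact Finset.mem_univ _
  · intro u _
    ext
    simp [ZMod.coe_unitOfCoprime, ZMod.natCast_val, ZMod.cast_id]
  · intro m hm
    have hlt : m < n := Finset.mem_range.mp (Finset.mem_filter.mp hm).1
    simp [ZMod.coe_unitOfCoprime, ZMod.val_natCast, Nat.mod_eq_of_lt hlt]
  · intro u _
    rfl

lemma filter_eq_image_aux {p k j a : ℕ} (hp : p.Prime) (hj : j < k)
    (ha : a.Coprime p) (ha' : a < p ^ (k - j)) :
    (Finset.range (p ^ k)).filter (fun m => Nat.Coprime m (p ^ k) ∧ m % p ^ (k - j) = a)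
      = (Finset.range (p ^ j)).image (fun s => a + s * p ^ (k - j)) := by
  have hq : 0 < p ^ (k - j) := pow_pos hp.pos _
  ext m
  simp only [Finset.mem_filter, Finset.mem_image, Finset.mem_range]
  constructor
  · rintro ⟨hmlt, -, hmod⟩
    refine ⟨m / p ^ (k - j), ?_, ?_⟩
    · rw [Nat.div_lt_iff_lt_mul hq, ← pow_add]
      have : j + (k - j) = k := by omega
      rwa [this]
    · rw [← hmod]
      exact Nat.mod_add_div' m _
  · rintro ⟨s, hs, rfl⟩
    have hkj : k - j ≥ 1 := by omega
    refine ⟨?_, ?_, ?_⟩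
    · calc a + s * p ^ (k - j) < (s + 1) * p ^ (k - j) := by
            rw [add_mul, one_mul]; omega
        _ ≤ p ^ j * p ^ (k - j) := by
            exact Nat.mul_le_mul_right _ (by omega)
        _ = p ^ k := by rw [← pow_add]; congr 1; omega
    · have hcp : (a + s * p ^ (k - j)).Coprime p := by
        have h2 : k - j = (k - j - 1) + 1 := by omega
        rw [h2, pow_succ, ← mul_assoc]
        exact (Nat.coprime_add_mul_right_left _ _ _).mpr ha
      exact hcp.pow_right _
    · rw [Nat.add_mul_mod_self_right, Nat.mod_eq_of_lt ha']

/-- The key computation: the sum of `∑_{j'<k} ζ^(m p^{j'})` over residues `m < p^k`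
coprime to `p^k` and congruent to `a` mod `p^{k-j}` equals `p^j` times a tail sum. -/
lemma key_sum_aux {K : Type*} [Field K] {p k : ℕ} (hp : p.Prime) {ζ : K}
    (hζ : IsPrimitiveRoot ζ (p ^ k)) {j a : ℕ} (hj : j < k)
    (ha : a.Coprime p) (ha' : a < p ^ (k - j)) :
    ∑ m ∈ (Finset.range (p ^ k)).filter
        (fun m => Nat.Coprime m (p ^ k) ∧ m % p ^ (k - j) = a),
      ∑ j' ∈ Finset.range k, ζ ^ (m * p ^ j')
      = ((p : K) ^ j) * ∑ j' ∈ Finset.Ico j k, ζ ^ (a * p ^ j') := by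
  rw [filter_eq_image_aux hp hj ha ha']
  have hq : 0 < p ^ (k - j) := pow_pos hp.pos _
  rw [Finset.sum_image (by
    intro s1 _ s2 _ h
    exact Nat.eq_of_mul_eq_mul_right hq (by
      have h' : a + s1 * p ^ (k - j) = a + s2 * p ^ (k - j) := h
      omega))]
  have hterm : ∀ s ∈ Finset.range (p ^ j), ∀ j' ∈ Finset.range k,
      ζ ^ ((a + s * p ^ (k - j)) * p ^ j')
        = ζ ^ (a * p ^ j') * (ζ ^ (p ^ (k - j) * p ^ j')) ^ s := by
    intro s _ j' _
    rw [← pow_mul, ← pow_add]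
    congr 1
    ring
  calc ∑ s ∈ Finset.range (p ^ j), ∑ j' ∈ Finset.range k,
          ζ ^ ((a + s * p ^ (k - j)) * p ^ j')
      = ∑ j' ∈ Finset.range k, ∑ s ∈ Finset.range (p ^ j),
          ζ ^ (a * p ^ j') * (ζ ^ (p ^ (k - j) * p ^ j')) ^ s := by
        rw [Finset.sum_comm]
        exact Finset.sum_congr rfl fun j' hj' => Finset.sum_congr rfl fun s hs =>
          hterm s hs j' hj'
    _ = ∑ j' ∈ Finset.range k, ζ ^ (a * p ^ j') *
          ∑ s ∈ Finset.range (p ^ j), (ζ ^ (p ^ (k - j) * p ^ j')) ^ s := by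
        simp [Finset.mul_sum]
    _ = ((p : K) ^ j) * ∑ j' ∈ Finset.Ico j k, ζ ^ (a * p ^ j') := by
        have hsplit : Finset.range k = Finset.Ico 0 j ∪ Finset.Ico j k := by
          rw [Finset.range_eq_Ico, Finset.Ico_union_Ico_eq_Ico (by omega) (by omega)]
        rw [hsplit, Finset.sum_union (by
          simp [Finset.disjoint_left]
          omega)]
        have hzero : ∀ j' ∈ Finset.Ico 0 j,
            ζ ^ (a * p ^ j') * ∑ s ∈ Finset.range (p ^ j),
              (ζ ^ (p ^ (k - j) * p ^ j')) ^ s = 0 := by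
          intro j' hj'
          have hj'j : j' < j := (Finset.mem_Ico.mp hj').2
          have hne : ζ ^ (p ^ (k - j) * p ^ j') ≠ 1 := by
            rw [← pow_add]
            refine hζ.pow_ne_one_of_pos_of_lt (pow_pos hp.pos _).ne' ?_
            exact Nat.pow_lt_pow_right hp.one_lt (by omega)
          have hpow1 : (ζ ^ (p ^ (k - j) * p ^ j')) ^ (p ^ j) = 1 := by
            rw [← pow_mul, ← pow_add, ← pow_add]
            have : k - j + j' + j = k + j' := by omega
            rw [this, pow_add, pow_mul, hζ.pow_eq_one, one_pow]
          rw [geom_sum_eq hne, hpow1, sub_self, zero_div, mul_zero]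
        rw [Finset.sum_eq_zero hzero, zero_add, Finset.mul_sum]
        refine Finset.sum_congr rfl fun j' hj' => ?_
        have hj'j : j ≤ j' := (Finset.mem_Ico.mp hj').1
        have hone : ζ ^ (p ^ (k - j) * p ^ j') = 1 := by
          rw [← pow_add]
          have : k - j + j' = k + (j' - j) := by omega
          rw [this, pow_add, pow_mul, hζ.pow_eq_one, one_pow]
        rw [hone]
        simp [mul_comm]

lemma main_aux {p k : ℕ} (hp : p.Prime) (hk : 1 ≤ k) (hNpos : 0 < p ^ k)
    {K : Type*} [Field K] [Algebra ℚ K]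
    [IsCyclotomicExtension {p ^ k} ℚ K]
    {ζ : K} (hζ : IsPrimitiveRoot ζ (p ^ k)) :
    ∃ B : Module.Basis (K ≃ₐ[ℚ] K) ℚ K,
      ∀ σ : K ≃ₐ[ℚ] K, B σ = σ (∑ j ∈ Finset.range k, ζ ^ p ^ j) := by
  haveI : NeZero (p ^ k) := ⟨(pow_pos hp.pos k).ne'⟩
  haveI : CharZero K := charZero_of_injective_algebraMap (algebraMap ℚ K).injective
  haveI : FiniteDimensional ℚ K :=
    IsCyclotomicExtension.finiteDimensional (S := {p ^ k}) (K := ℚ) K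
  haveI : IsGalois ℚ K :=
    IsCyclotomicExtension.isGalois (S := {p ^ k}) (K := ℚ) (L := K)
  have hirr : Irreducible (Polynomial.cyclotomic (p ^ k) ℚ) :=
    Polynomial.cyclotomic.irreducible_rat (pow_pos hp.pos k)
  have hinj : Function.Injective (hζ.autToPow ℚ) :=
    IsPrimitiveRoot.autToPow_injective (n := p ^ k) ℚ hζ
  have hcard : Fintype.card (K ≃ₐ[ℚ] K) = Fintype.card (ZMod (p ^ k))ˣ := by
    rw [← Nat.card_eq_fintype_card, IsGalois.card_aut_eq_finrank,
      IsCyclotomicExtension.finrank (n := p ^ k) K hirr,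
      ZMod.card_units_eq_totient]
  have hbij : Function.Bijective (hζ.autToPow ℚ) :=
    (Fintype.bijective_iff_injective_and_card _).mpr ⟨hinj, hcard⟩
  set eqv := Equiv.ofBijective _ hbij with he
  have espec : ∀ σ : K ≃ₐ[ℚ] K, σ ζ = ζ ^ ((hζ.autToPow ℚ σ : ZMod (p ^ k))).val :=
    fun σ => (hζ.autToPow_spec ℚ σ).symm
  set η := ∑ j ∈ Finset.range k, ζ ^ p ^ j with hη
  set S := Submodule.span ℚ (Set.range fun σ : K ≃ₐ[ℚ] K => σ η) with hS
  have hση : ∀ σ : K ≃ₐ[ℚ] K,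
      σ η = ∑ j' ∈ Finset.range k, ζ ^ (((hζ.autToPow ℚ σ : ZMod (p ^ k))).val * p ^ j') := by
    intro σ
    rw [hη, map_sum]
    refine Finset.sum_congr rfl fun j' _ => ?_
    rw [map_pow, espec σ, ← pow_mul]
  have hzmod : ∀ x : ℕ, ζ ^ x = ζ ^ (x % p ^ k) := by
    intro x
    conv_lhs => rw [← Nat.div_add_mod x (p ^ k)]
    rw [pow_add, pow_mul, hζ.pow_eq_one, one_pow, one_mul]
  -- the tail sums are in the span
  have htau : ∀ j, j ≤ k → ∀ a : ℕ, a.Coprime p →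
      (∑ j' ∈ Finset.Ico j k, ζ ^ (a * p ^ j')) ∈ S := by
    intro j hjk a ha
    rcases eq_or_lt_of_le hjk with rfl | hj
    · simp
    have hq : 0 < p ^ (k - j) := pow_pos hp.pos _
    set a' := a % p ^ (k - j) with ha'def
    have ha'lt : a' < p ^ (k - j) := Nat.mod_lt _ hq
    have ha'c : a'.Coprime p := by
      have hdvd : p ∣ p ^ (k - j) := dvd_pow_self p (by omega)
      rw [Nat.coprime_comm, hp.coprime_iff_not_dvd] at ha ⊢
      intro hpa'
      exact ha ((Nat.dvd_mod_iff hdvd).mp hpa')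
    have hsum_eq : ∑ j' ∈ Finset.Ico j k, ζ ^ (a * p ^ j')
        = ∑ j' ∈ Finset.Ico j k, ζ ^ (a' * p ^ j') := by
      refine Finset.sum_congr rfl fun j' hj' => ?_
      have hjj' : j ≤ j' := (Finset.mem_Ico.mp hj').1
      have hmod : a * p ^ j' ≡ a' * p ^ j' [MOD p ^ k] := by
        have h1 : a ≡ a' [MOD p ^ (k - j)] := (Nat.mod_modEq a _).symm
        have h2 := Nat.ModEq.mul_right' (p ^ j') h1
        refine Nat.ModEq.of_dvd ?_ h2
        rw [← pow_add]
        exact pow_dvd_pow p (by omega)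
      rw [hzmod (a * p ^ j'), hzmod (a' * p ^ j')]
      exact congrArg (fun t => ζ ^ t) hmod
    rw [hsum_eq]
    have key := key_sum_aux hp hζ hj ha'c ha'lt
    have hx : (∑ m ∈ (Finset.range (p ^ k)).filter
        (fun m => Nat.Coprime m (p ^ k) ∧ m % p ^ (k - j) = a'),
        ∑ j' ∈ Finset.range k, ζ ^ (m * p ^ j')) ∈ S := by
      have hrw : (∑ σ : K ≃ₐ[ℚ] K,
          if ((hζ.autToPow ℚ σ : ZMod (p ^ k))).val % p ^ (k - j) = a' then σ η else 0)
          = ∑ m ∈ (Finset.range (p ^ k)).filter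
            (fun m => Nat.Coprime m (p ^ k) ∧ m % p ^ (k - j) = a'),
            ∑ j' ∈ Finset.range k, ζ ^ (m * p ^ j') := by
        rw [Fintype.sum_equiv eqv
          (fun σ : K ≃ₐ[ℚ] K =>
            if ((hζ.autToPow ℚ σ : ZMod (p ^ k))).val % p ^ (k - j) = a' then σ η else 0)
          (fun u => if ((u : ZMod (p ^ k))).val % p ^ (k - j) = a'
            then ∑ j' ∈ Finset.range k, ζ ^ (((u : ZMod (p ^ k))).val * p ^ j') else 0)
          (fun σ => by simp only [hση]; rfl)]
        rw [sum_units_val_aux (p ^ k)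
          (fun m => if m % p ^ (k - j) = a'
            then ∑ j' ∈ Finset.range k, ζ ^ (m * p ^ j') else 0)]
        rw [← Finset.sum_filter, Finset.filter_filter]
      rw [← hrw]
      refine Submodule.sum_mem _ fun σ _ => ?_
      split
      · exact Submodule.subset_span ⟨σ, rfl⟩
      · exact Submodule.zero_mem _
    rw [key] at hx
    have hKne : ((p : K) ^ j) ≠ 0 := pow_ne_zero _ (Nat.cast_ne_zero.mpr hp.pos.ne')
    have hx2 := S.smul_mem (((p : ℚ) ^ j)⁻¹) hx
    rwa [Algebra.smul_def, map_inv₀, map_pow, show algebraMap ℚ K (p : ℚ) = (p : K) by simp,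
      inv_mul_cancel_left₀ hKne] at hx2
  -- all relevant powers of ζ are in the span
  have hpow : ∀ a : ℕ, a.Coprime p → ∀ j, j < k → ζ ^ (a * p ^ j) ∈ S := by
    intro a ha j hj
    have h1 := htau j hj.le a ha
    have h2 := htau (j + 1) hj a ha
    rw [Finset.sum_eq_sum_Ico_succ_bot hj] at h1
    have h3 := Submodule.sub_mem S h1 h2
    simpa using h3
  have hall : ∀ m : ℕ, ζ ^ m ∈ S := by
    intro m
    rw [hzmod m]
    set m' := m % p ^ k with hm'def
    have hm'lt : m' < p ^ k := Nat.mod_lt _ (pow_pos hp.pos k)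
    by_cases h0 : m' = 0
    · rw [h0, pow_zero]
      have hroot : Polynomial.eval ζ (Polynomial.cyclotomic (p ^ k) K) = 0 :=
        hζ.isRoot_cyclotomic (pow_pos hp.pos k)
      have hk' : k = (k - 1) + 1 := by omega
      rw [show p ^ k = p ^ ((k - 1) + 1) from by rw [← hk'],
        Polynomial.cyclotomic_prime_pow_eq_geom_sum hp] at hroot
      simp only [Polynomial.eval_finset_sum, Polynomial.eval_pow, Polynomial.eval_X] at hroot
      rw [Finset.range_eq_Ico, Finset.sum_eq_sum_Ico_succ_bot hp.pos, pow_zero] at hroot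
      rw [eq_neg_of_add_eq_zero_left hroot]
      refine Submodule.neg_mem _ (Submodule.sum_mem _ fun i hi => ?_)
      have hi' := Finset.mem_Ico.mp hi
      have hic : i.Coprime p := Nat.coprime_comm.mp
        ((hp.coprime_iff_not_dvd).mpr (Nat.not_dvd_of_pos_of_lt hi'.1 hi'.2))
      have hmem := hpow i hic (k - 1) (by omega)
      have heq : (ζ ^ p ^ (k - 1)) ^ i = ζ ^ (i * p ^ (k - 1)) := by
        rw [← pow_mul, mul_comm]
      rw [heq]
      exact hmem
    · set j := m'.factorization p with hjdef
      have hdvd : p ^ j ∣ m' := Nat.ordProj_dvd m' p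
      have hjk : j < k := by
        have h1 : p ^ j ≤ m' := Nat.le_of_dvd (Nat.pos_of_ne_zero h0) hdvd
        exact (Nat.pow_lt_pow_iff_right hp.one_lt).mp (lt_of_le_of_lt h1 hm'lt)
      have hac : (m' / p ^ j).Coprime p := Nat.coprime_comm.mp (Nat.coprime_ordCompl hp h0)
      have heq : m' = (m' / p ^ j) * p ^ j := (Nat.div_mul_cancel hdvd).symm
      rw [heq]
      exact hpow _ hac j hjk
  have hprim : IsPrimitiveRoot ζ (p ^ k) := hζ
  have htop : ⊤ ≤ S := by
    rw [← (hprim.powerBasis ℚ).basis.span_eq, Submodule.span_le]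
    rintro x ⟨i, rfl⟩
    have hbi : (hprim.powerBasis ℚ).basis i = ζ ^ (i : ℕ) := by
      rw [(hprim.powerBasis ℚ).coe_basis, IsPrimitiveRoot.powerBasis_gen]
    rw [hbi]
    exact hall _
  have hcard2 : Fintype.card (K ≃ₐ[ℚ] K) = Module.finrank ℚ K :=
    by rw [← Nat.card_eq_fintype_card]; exact IsGalois.card_aut_eq_finrank ℚ K
  exact ⟨basisOfTopLeSpanOfCardEqFinrank _ htop hcard2,
    fun σ => congrFun (coe_basisOfTopLeSpanOfCardEqFinrank _ htop hcard2) σ⟩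

/-- `x` is a normal basis generator of a field `K` over `ℚ`:
the family `(σ x)` indexed by `σ ∈ Gal(K/ℚ)` is a `ℚ`-basis of `K`. -/
def IsNormalBasisGenerator (K : Type*) [Field K] [Algebra ℚ K] (x : K) : Prop :=
  ∃ B : Module.Basis (K ≃ₐ[ℚ] K) ℚ K, ∀ σ : K ≃ₐ[ℚ] K, B σ = σ x

theorem stmt_0 (p k : ℕ) (hp : p.Prime) (hk : 1 ≤ k) (N : ℕ+) (hN : (N : ℕ) = p ^ k)
    (ζ : CyclotomicField N ℚ) (hζ : IsPrimitiveRoot ζ (p ^ k)) :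
    IsNormalBasisGenerator (CyclotomicField N ℚ) (∑ j ∈ Finset.range k, ζ ^ p ^ j) := by
  obtain ⟨N, hNpos⟩ := N
  have hN' : N = p ^ k := hN
  subst hN'
  haveI : NeZero (((p ^ k : ℕ)) : ℚ) :=
    ⟨by exact_mod_cast (pow_pos hp.pos k).ne'⟩
  haveI : NeZero (p ^ k) := ⟨(pow_pos hp.pos k).ne'⟩
  haveI : IsCyclotomicExtension {p ^ k} ℚ (CyclotomicField (⟨p ^ k, hNpos⟩ : ℕ+) ℚ) :=
    CyclotomicField.isCyclotomicExtension (p ^ k) ℚ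
  exact @main_aux p k hp hk hNpos _ _ _ this ζ hζ
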